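/- arXiv:2309.12025 — 2 statements merged into one kernel-verified Lean document; each statement's English description precedes it below -/
import Mathlib

section
/- Let f be a nonnegative k-submodular function with f(0) = 0, let (e_1,i_1),…,(e_t,i_t) be an LAA run, and let o be a k-set with c(o) ≤ B such that for every e ∈ supp(o) \ supp(x^t) and every i ∈ {1,…,k}, Δ_{(e,i)}f(x^t) ≤ c(e)·f(x^t)/B. Then f(o^t) ≤ 4·f(x^t). -/
/-- The meet `x ⊓ y` of two `k`-sets, with components `Xᵢ ∩ Yᵢ`. -/
def sqcap {V : Type*} (x y : V → ℕ) : V → ℕ :=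
  fun e => if x e = y e then x e else 0

/-- The join `x ⊔ y` of two `k`-sets, with components
`Zᵢ = (Xᵢ ∪ Yᵢ) \ ⋃_{j ≠ i} (Xⱼ ∪ Yⱼ)`. -/
def sqcup {V : Type*} (x y : V → ℕ) : V → ℕ :=
  fun e =>
    if x e = 0 then y e
    else if y e = 0 then x e
    else if x e = y e then x e else 0

/-- A `k`-set: every element gets a position in `{0, 1, …, k}`
(`0` meaning unselected). -/
def IsKSet {V : Type*} (k : ℕ) (x : V → ℕ) : Prop := ∀ e, x e ≤ k

/-- `x ⊑ y`: every component of `x` is contained in the corresponding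
component of `y`. -/
def KLE {V : Type*} (x y : V → ℕ) : Prop := ∀ e, x e ≠ 0 → y e = x e

/-- The singleton `k`-set `(e, i)`. -/
def singl {V : Type*} [DecidableEq V] (e : V) (i : ℕ) : V → ℕ :=
  fun e' => if e' = e then i else 0

/-- `k`-submodularity: `f x + f y ≥ f (x ⊓ y) + f (x ⊔ y)` for all `k`-sets. -/
def KSubmodular {V : Type*} (k : ℕ) (f : (V → ℕ) → ℝ) : Prop :=
  ∀ x y : V → ℕ, IsKSet k x → IsKSet k y →
    f x + f y ≥ f (sqcap x y) + f (sqcup x y)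

/-- The marginal gain `Δ_{(e,i)} f(x) = f (x ⊔ (e,i)) - f x`. -/
def marg {V : Type*} [DecidableEq V] (f : (V → ℕ) → ℝ) (e : V) (i : ℕ)
    (x : V → ℕ) : ℝ :=
  f (sqcup x (singl e i)) - f x

/-- The cost of a `k`-set: the total cost of its support. -/
noncomputable def cost {V : Type*} [Fintype V] (c : V → ℝ) (x : V → ℕ) : ℝ :=
  ∑ e ∈ Finset.univ.filter (fun e => x e ≠ 0), c e

section Aux

variable {V : Type*}

lemma isKSet_sqcup (k : ℕ) (x y : V → ℕ) (hx : IsKSet k x) (hy : IsKSet k y) :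
    IsKSet k (sqcup x y) := by
  intro e'
  unfold sqcup
  split_ifs
  · exact hy e'
  · exact hx e'
  · exact hx e'
  · exact Nat.zero_le k

lemma isKSet_singl [DecidableEq V] (k : ℕ) (a : V) (i : ℕ) (hi : i ≤ k) :
    IsKSet k (singl a i) := by
  intro e'
  unfold singl
  split_ifs
  · exact hi
  · exact Nat.zero_le k

lemma sqcup_singl_of_ne [DecidableEq V] (x : V → ℕ) (a : V) (i : ℕ) (e' : V)
    (h : e' ≠ a) : sqcup x (singl a i) e' = x e' := by
  unfold sqcup singl
  simp only [if_neg h]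
  by_cases hx : x e' = 0 <;> simp [hx]

lemma sqcup_singl_self [DecidableEq V] (x : V → ℕ) (a : V) (i : ℕ)
    (hxa : x a = 0) : sqcup x (singl a i) a = i := by
  unfold sqcup singl
  simp [hxa]

/-- Orthant submodularity from `k`-submodularity. -/
lemma orthant [DecidableEq V] (k : ℕ) (f : (V → ℕ) → ℝ) (hsub : KSubmodular k f)
    (x y : V → ℕ) (hx : IsKSet k x) (hy : IsKSet k y) (hxy : KLE x y)
    (a : V) (hya : y a = 0) (i : ℕ) (hi1 : 1 ≤ i) (hik : i ≤ k) :
    marg f a i y ≤ marg f a i x := by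
  have hxa : x a = 0 := by
    by_contra h
    exact absurd (hxy a h) (by rw [hya]; exact fun h' => h h'.symm)
  have hne : i ≠ 0 := Nat.one_le_iff_ne_zero.mp hi1
  have hX : IsKSet k (sqcup x (singl a i)) :=
    isKSet_sqcup k _ _ hx (isKSet_singl k a i hik)
  have key := hsub (sqcup x (singl a i)) y hX hy
  have hcap : sqcap (sqcup x (singl a i)) y = x := by
    funext e'
    by_cases h : e' = a
    · subst h
      rw [hxa]
      unfold sqcap
      rw [sqcup_singl_self x e' i hxa, hya]
      simp [hne]
    · rw [show sqcap (sqcup x (singl a i)) y e'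
          = if sqcup x (singl a i) e' = y e' then sqcup x (singl a i) e' else 0 from rfl,
          sqcup_singl_of_ne x a i e' h]
      by_cases hx0 : x e' = 0
      · simp [hx0]
      · rw [hxy e' hx0]
        simp
  have hcup : sqcup (sqcup x (singl a i)) y = sqcup y (singl a i) := by
    funext e'
    by_cases h : e' = a
    · subst h
      rw [show sqcup (sqcup x (singl e' i)) y e'
          = if sqcup x (singl e' i) e' = 0 then y e'
            else if y e' = 0 then sqcup x (singl e' i) e'
            else if sqcup x (singl e' i) e' = y e' then sqcup x (singl e' i) e' else 0
          from rfl, sqcup_singl_self x e' i hxa, sqcup_singl_self y e' i hya, hya]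
      simp [hne]
    · rw [sqcup_singl_of_ne y a i e' h,
        show sqcup (sqcup x (singl a i)) y e'
          = if sqcup x (singl a i) e' = 0 then y e'
              else if y e' = 0 then sqcup x (singl a i) e'
              else if sqcup x (singl a i) e' = y e' then sqcup x (singl a i) e' else 0 from rfl,
        sqcup_singl_of_ne x a i e' h]
      by_cases hx0 : x e' = 0
      · simp [hx0]
      · rw [hxy e' hx0]
        simp [hx0]
  rw [hcap, hcup] at key
  unfold marg
  linarith

end Aux

/-- if no remaining element of `o` passes the density test at the
end of the LAA run, then `f(o^t) ≤ 4 f(x^t)`. -/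
theorem stmt2 {V : Type*} [Fintype V] [DecidableEq V]
    (k : ℕ) (hk : 2 ≤ k)
    (f : (V → ℕ) → ℝ)
    (hsub : KSubmodular k f)
    (hnn : ∀ x : V → ℕ, IsKSet k x → 0 ≤ f x)
    (hf0 : f (fun _ => 0) = 0)
    (c : V → ℝ) (hc : ∀ e, 0 < c e) (B : ℝ) (hB : 0 < B)
    (t : ℕ) (e : ℕ → V) (pos : ℕ → ℕ)
    (hdist : ∀ j₁ j₂, j₁ < t → j₂ < t → e j₁ = e j₂ → j₁ = j₂)
    (hposk : ∀ j < t, 1 ≤ pos j ∧ pos j ≤ k)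
    (x : ℕ → (V → ℕ))
    (hx0 : x 0 = fun _ => 0)
    (hxsucc : ∀ j < t, x (j + 1) = sqcup (x j) (singl (e j) (pos j)))
    (hbest : ∀ j < t, ∀ l, 1 ≤ l → l ≤ k →
      f (sqcup (x j) (singl (e j) l)) ≤ f (sqcup (x j) (singl (e j) (pos j))))
    (hgain : ∀ j < t, c (e j) * f (x j) / B ≤ marg f (e j) (pos j) (x j))
    (hlight : ∀ j < t, c (e j) ≤ B / 2)
    (o : V → ℕ) (ho : IsKSet k o) (hoB : cost c o ≤ B)
    (hsat : ∀ e', o e' ≠ 0 → x t e' = 0 → ∀ i, 1 ≤ i → i ≤ k →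
      marg f e' i (x t) ≤ c e' * f (x t) / B) :
    f (sqcup (sqcup o (x t)) (x t)) ≤ 4 * f (x t) := by
    classical
  have hxk : ∀ j, j ≤ t → IsKSet k (x j) := by
    intro j
    induction j with
    | zero => intro _; rw [hx0]; intro e'; exact Nat.zero_le k
    | succ n ih =>
      intro hn
      have hnt : n < t := hn
      rw [hxsucc n hnt]
      exact isKSet_sqcup k _ _ (ih (Nat.le_of_lt hnt))
        (isKSet_singl k _ _ (hposk n hnt).2)
  have hxt : IsKSet k (x t) := hxk t le_rfl
  have hfxt : 0 ≤ f (x t) := hnn _ hxt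
  set S : Finset V := Finset.univ.filter (fun e' => o e' ≠ 0 ∧ x t e' = 0) with hS
  set z : Finset V → (V → ℕ) := fun T e' => if e' ∈ T then o e' else x t e' with hz
  have hzk : ∀ T : Finset V, IsKSet k (z T) := by
    intro T e'
    simp only [hz]
    split_ifs
    · exact ho e'
    · exact hxt e'
  have main : ∀ T : Finset V, T ⊆ S →
      f (z T) ≤ f (x t) + ∑ e' ∈ T, c e' * f (x t) / B := by
    intro T
    induction T using Finset.induction_on with
    | empty =>
      intro _
      have hze : z ∅ = x t := by funext e'; simp [hz]
      rw [hze]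
      simp
    | @insert a T ha ih =>
      intro hsubS
      have haS : a ∈ S := hsubS (Finset.mem_insert_self a T)
      have hTS : T ⊆ S := fun y hy => hsubS (Finset.mem_insert_of_mem hy)
      rw [hS, Finset.mem_filter] at haS
      obtain ⟨-, hoa, hxta⟩ := haS
      have hzTa : z T a = 0 := by simp [hz, ha, hxta]
      have hoa1 : 1 ≤ o a := Nat.one_le_iff_ne_zero.mpr hoa
      have hoak : o a ≤ k := ho a
      have hkle : KLE (x t) (z T) := by
        intro e' he'
        simp only [hz]
        rw [if_neg]
        intro heT
        have hmem := hTS heT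
        rw [hS, Finset.mem_filter] at hmem
        exact he' hmem.2.2
      have hstep : z (insert a T) = sqcup (z T) (singl a (o a)) := by
        funext e'
        by_cases h : e' = a
        · subst h
          rw [sqcup_singl_self _ _ _ hzTa]
          simp [hz]
        · rw [sqcup_singl_of_ne _ _ _ _ h]
          simp [hz, Finset.mem_insert, h]
      have hm1 : marg f a (o a) (z T) ≤ marg f a (o a) (x t) :=
        orthant k f hsub (x t) (z T) hxt (hzk T) hkle a hzTa (o a) hoa1 hoak
      have hm2 : marg f a (o a) (x t) ≤ c a * f (x t) / B :=
        hsat a hoa hxta (o a) hoa1 hoak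
      have heq : f (z (insert a T)) = f (sqcup (z T) (singl a (o a))) := by
        rw [hstep]
      have hih := ih hTS
      unfold marg at hm1 hm2
      rw [Finset.sum_insert ha]
      linarith
  have hzS : z S = sqcup (sqcup o (x t)) (x t) := by
    funext e'
    simp only [hz, hS, Finset.mem_filter, Finset.mem_univ, true_and]
    unfold sqcup
    by_cases h1 : x t e' = 0 <;> by_cases h2 : o e' = 0 <;>
      by_cases h3 : o e' = x t e' <;> simp [h1, h2, h3]
  have hsum : ∑ e' ∈ S, c e' * f (x t) / B ≤ f (x t) := by
    have h1 : ∑ e' ∈ S, c e' ≤ cost c o := by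
      unfold cost
      apply Finset.sum_le_sum_of_subset_of_nonneg
      · intro y hy
        rw [hS, Finset.mem_filter] at hy
        exact Finset.mem_filter.mpr ⟨Finset.mem_univ y, hy.2.1⟩
      · intro y _ _
        exact (hc y).le
    calc ∑ e' ∈ S, c e' * f (x t) / B = (∑ e' ∈ S, c e') * (f (x t) / B) := by
          rw [Finset.sum_mul]
          exact Finset.sum_congr rfl fun y _ => by ring
      _ ≤ B * (f (x t) / B) :=
          mul_le_mul_of_nonneg_right (le_trans h1 hoB) (by positivity)
      _ = f (x t) := by field_simp
  have hfin := main S (Finset.Subset.refl S)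
  rw [hzS] at hfin
  linarith
end

section
/- Let f be a nonnegative k-submodular function with f(0) = 0, let s = s^n be the output of an RLA run with threshold τ ≥ 0, and let o be a k-set with c(o) ≤ B. If no element e ∈ supp(o) \ supp(s) satisfies both Δ_{(e, o(e))}f(s^{<e}) ≥ c(e)·τ and c(s^{<e}) + c(e) > B, then f(o) ≤ 3·f(s) + c(o)·τ. -/
section Aux
variable {V : Type*} [DecidableEq V]

lemma sqcup_singl_ne (x : V → ℕ) (u : V) (p : ℕ) {v : V} (hv : v ≠ u) :
    sqcup x (singl u p) v = x v := by
  simp only [sqcup, singl, if_neg hv]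
  split_ifs <;> simp_all

lemma sqcup_singl_self_s7 (x : V → ℕ) (u : V) (p : ℕ) (hx : x u = 0) :
    sqcup x (singl u p) u = p := by
  simp [sqcup, singl, hx]

lemma isKSet_sqcup_singl {k : ℕ} {x : V → ℕ} (hx : IsKSet k x) {u : V} {p : ℕ} (hp : p ≤ k) :
    IsKSet k (sqcup x (singl u p)) := by
  intro v
  by_cases hv : v = u
  · subst hv
    simp only [sqcup, singl, if_pos rfl]
    split_ifs <;> first | exact hp | exact hx _ | omega
  · rw [sqcup_singl_ne x u p hv]; exact hx v

lemma pairwise_mono {k : ℕ} (f : (V → ℕ) → ℝ) (hsub : KSubmodular k f)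
    {x : V → ℕ} (hx : IsKSet k x) {u : V} (hxu : x u = 0)
    {i j : ℕ} (hi1 : 1 ≤ i) (hik : i ≤ k) (hj1 : 1 ≤ j) (hjk : j ≤ k) (hij : i ≠ j) :
    0 ≤ marg f u i x + marg f u j x := by
  have h := hsub (sqcup x (singl u i)) (sqcup x (singl u j))
    (isKSet_sqcup_singl hx hik) (isKSet_sqcup_singl hx hjk)
  have hcap : sqcap (sqcup x (singl u i)) (sqcup x (singl u j)) = x := by
    funext v
    by_cases hv : v = u
    · subst hv
      rw [sqcap, sqcup_singl_self_s7 _ _ _ hxu, sqcup_singl_self_s7 _ _ _ hxu,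
        if_neg hij, hxu]
    · rw [sqcap, sqcup_singl_ne _ _ _ hv, sqcup_singl_ne _ _ _ hv, if_pos rfl]
  have hcup : sqcup (sqcup x (singl u i)) (sqcup x (singl u j)) = x := by
    funext v
    by_cases hv : v = u
    · subst hv
      rw [sqcup, sqcup_singl_self_s7 _ _ _ hxu, sqcup_singl_self_s7 _ _ _ hxu]
      simp only [if_neg hij]
      rw [if_neg (by omega), if_neg (by omega), hxu]
    · rw [sqcup, sqcup_singl_ne _ _ _ hv, sqcup_singl_ne _ _ _ hv]
      split_ifs <;> simp_all
  rw [hcap, hcup] at h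
  simp only [marg]
  linarith

lemma orthant_mono {k : ℕ} (f : (V → ℕ) → ℝ) (hsub : KSubmodular k f)
    {x y : V → ℕ} (hx : IsKSet k x) (hy : IsKSet k y) (hxy : KLE x y)
    {u : V} (hyu : y u = 0) {i : ℕ} (hi1 : 1 ≤ i) (hik : i ≤ k) :
    marg f u i y ≤ marg f u i x := by
  have hxu : x u = 0 := by
    by_contra hne
    exact hne (by rw [← hxy u hne, hyu])
  have h := hsub (sqcup x (singl u i)) y (isKSet_sqcup_singl hx hik) hy
  have hcap : sqcap (sqcup x (singl u i)) y = x := by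
    funext v
    by_cases hv : v = u
    · subst hv
      rw [sqcap, sqcup_singl_self_s7 _ _ _ hxu, hyu, if_neg (by omega), hxu]
    · rw [sqcap, sqcup_singl_ne _ _ _ hv]
      by_cases hxv : x v = 0
      · simp [hxv]
      · rw [hxy v hxv, if_pos rfl]
  have hcup : sqcup (sqcup x (singl u i)) y = sqcup y (singl u i) := by
    funext v
    by_cases hv : v = u
    · subst hv
      rw [sqcup, sqcup_singl_self_s7 _ _ _ hxu, hyu, if_neg (by omega), if_pos rfl,
        sqcup_singl_self_s7 _ _ _ hyu]
    · rw [sqcup, sqcup_singl_ne _ _ _ hv, sqcup_singl_ne _ _ _ hv]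
      by_cases hxv : x v = 0
      · simp [hxv]
      · rw [hxy v hxv]
        simp [hxv]
  rw [hcap, hcup] at h
  simp only [marg]
  linarith

end Aux

/-- if along an RLA run with threshold `τ ≥ 0` no element of
`supp(o) \ supp(s)` passes the threshold while being blocked by the budget,
then `f(o) ≤ 3 f(s) + c(o)·τ`. -/

theorem stmt7 {V : Type*} [Fintype V] [DecidableEq V]
    (k : ℕ) (hk : 2 ≤ k)
    (f : (V → ℕ) → ℝ)
    (hsub : KSubmodular k f)
    (hnn : ∀ x : V → ℕ, IsKSet k x → 0 ≤ f x)
    (hf0 : f (fun _ => 0) = 0)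
    (c : V → ℝ) (hc : ∀ e, 0 < c e) (B : ℝ) (hB : 0 < B)
    (τ : ℝ) (hτ : 0 ≤ τ)
    (n : ℕ) (e : ℕ → V)
    (hinj : ∀ j₁ j₂, j₁ < n → j₂ < n → e j₁ = e j₂ → j₁ = j₂)
    (hsurj : ∀ v : V, ∃ j, j < n ∧ e j = v)
    (s : ℕ → (V → ℕ)) (pos : ℕ → ℕ)
    (hs0 : s 0 = fun _ => 0)
    (hposk : ∀ j < n, 1 ≤ pos j ∧ pos j ≤ k)
    (hbest : ∀ j < n, ∀ l, 1 ≤ l → l ≤ k →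
      marg f (e j) l (s j) ≤ marg f (e j) (pos j) (s j))
    (hstep : ∀ j < n,
      ((cost c (s j) + c (e j) ≤ B ∧ c (e j) * τ ≤ marg f (e j) (pos j) (s j)) →
        s (j + 1) = sqcup (s j) (singl (e j) (pos j))) ∧
      (¬ (cost c (s j) + c (e j) ≤ B ∧ c (e j) * τ ≤ marg f (e j) (pos j) (s j)) →
        s (j + 1) = s j))
    (o : V → ℕ) (ho : IsKSet k o) (hoB : cost c o ≤ B)
    (hnb : ∀ j < n, o (e j) ≠ 0 → s n (e j) = 0 →
      ¬ (c (e j) * τ ≤ marg f (e j) (o (e j)) (s j) ∧ B < cost c (s j) + c (e j))) :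
    f o ≤ 3 * f (s n) + cost c o * τ := by
  classical
  -- basic invariants of the run
  have hsK : ∀ j, j ≤ n → IsKSet k (s j) := by
    intro j
    induction j with
    | zero => intro _ v; rw [hs0]; exact Nat.zero_le k
    | succ j ih =>
      intro hj
      have hjn : j < n := hj
      rcases hstep j hjn with ⟨hacc, hrej⟩
      by_cases hC : cost c (s j) + c (e j) ≤ B ∧ c (e j) * τ ≤ marg f (e j) (pos j) (s j)
      · rw [hacc hC]; exact isKSet_sqcup_singl (ih hjn.le) (hposk j hjn).2
      · rw [hrej hC]; exact ih hjn.le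
  have hpres : ∀ j, j < n → ∀ v, v ≠ e j → s (j + 1) v = s j v := by
    intro j hj v hv
    rcases hstep j hj with ⟨hacc, hrej⟩
    by_cases hC : cost c (s j) + c (e j) ≤ B ∧ c (e j) * τ ≤ marg f (e j) (pos j) (s j)
    · rw [hacc hC]; exact sqcup_singl_ne _ _ _ hv
    · rw [hrej hC]
  have hzero : ∀ j t, j ≤ t → t < n → s j (e t) = 0 := by
    intro j
    induction j with
    | zero => intro t _ _; rw [hs0]
    | succ j ih =>
      intro t hjt htn
      have hjn : j < n := by omega
      have hne : e t ≠ e j := fun h => by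
        have := hinj t j htn hjn h; omega
      rw [hpres j hjn _ hne]
      exact ih t (by omega) htn
  have hconst : ∀ t, t < n → ∀ j₂, t < j₂ → j₂ ≤ n → s j₂ (e t) = s (t + 1) (e t) := by
    intro t htn j₂
    induction j₂ with
    | zero => omega
    | succ j ih =>
      intro h1 h2
      by_cases hjt : j = t
      · subst hjt; rfl
      · have hjn : j < n := h2
        have hne : e t ≠ e j := fun h => hjt ((hinj t j htn hjn h).symm)
        rw [hpres j hjn _ hne]
        exact ih (by omega) (by omega)
  -- the hybrid sequence
  set ov : ℕ → V → ℕ := fun j v => if ∃ t, t < j ∧ e t = v then s n v else o v with hov_def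
  have hov0 : ov 0 = o := by
    funext v; simp [hov_def]
  have hovn : ov n = s n := by
    funext v
    obtain ⟨t, htn, hte⟩ := hsurj v
    simp only [hov_def]
    rw [if_pos ⟨t, htn, hte⟩]
  have hovu : ∀ j, j < n → ov j (e j) = o (e j) := by
    intro j hj
    simp only [hov_def]
    rw [if_neg]
    rintro ⟨t, htj, hte⟩
    have := hinj t j (by omega) hj hte; omega
  have hovsucc_ne : ∀ j, ∀ v, v ≠ e j → ov (j + 1) v = ov j v := by
    intro j v hv
    simp only [hov_def]
    have : (∃ t, t < j + 1 ∧ e t = v) ↔ (∃ t, t < j ∧ e t = v) := by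
      constructor
      · rintro ⟨t, htj, hte⟩
        rcases Nat.lt_succ_iff_lt_or_eq.mp htj with h | h
        · exact ⟨t, h, hte⟩
        · subst h; exact absurd hte.symm hv
      · rintro ⟨t, htj, hte⟩; exact ⟨t, by omega, hte⟩
    rw [if_congr this rfl rfl]
  have hovsucc_u : ∀ j, j < n → ov (j + 1) (e j) = s (j + 1) (e j) := by
    intro j hj
    simp only [hov_def]
    rw [if_pos ⟨j, by omega, rfl⟩]
    exact hconst j hj n hj le_rfl
  have hovK : ∀ j, IsKSet k (ov j) := by
    intro j v
    simp only [hov_def]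
    split_ifs
    · exact hsK n le_rfl v
    · exact ho v
  have hKLE : ∀ j, j ≤ n → KLE (s j) (ov j) := by
    intro j hj v hv
    obtain ⟨t, htn, hte⟩ := hsurj v
    have htj : t < j := by
      by_contra h
      exact hv (by rw [← hte]; exact hzero j t (by omega) htn)
    simp only [hov_def]
    rw [if_pos ⟨t, htj, hte⟩, ← hte, hconst t htn n (by omega) le_rfl,
      ← hconst t htn j htj hj, hte]
  -- key per-step inequality
  have key : ∀ j, j < n →
      f (ov j) - f (ov (j + 1)) ≤ 2 * (f (s (j + 1)) - f (s j)) +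
        (if s (j + 1) = s j ∧ o (e j) ≠ 0 then c (e j) * τ else 0) := by
    intro j hj
    set u := e j with hu
    set i := o u with hi
    set p := pos j with hp
    set x := s j with hx
    have hxu : x u = 0 := hzero j j le_rfl hj
    set w : V → ℕ := fun v => if v = u then 0 else ov j v with hw_def
    have hwu : w u = 0 := by simp [hw_def]
    have hwK : IsKSet k w := by
      intro v
      simp only [hw_def]
      split_ifs
      · omega
      · exact hovK j v
    have hxw : KLE x w := by
      intro v hv
      have hvu : v ≠ u := fun h => hv (h ▸ hxu)
      simp only [hw_def, if_neg hvu]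
      exact hKLE j hj.le v hv
    have hovj : i ≠ 0 → ov j = sqcup w (singl u i) := by
      intro hi0
      funext v
      by_cases hv : v = u
      · subst hv
        rw [sqcup_singl_self_s7 _ _ _ hwu, hovu j hj]
      · rw [sqcup_singl_ne _ _ _ hv, hw_def]
        simp [hv]
    have hovj0 : i = 0 → ov j = w := by
      intro hi0
      funext v
      by_cases hv : v = u
      · subst hv
        rw [hovu j hj, ← hi, hi0, hwu]
      · simp [hw_def, hv]
    have hovs : ∀ q, s (j + 1) u = q → q ≠ 0 → ov (j + 1) = sqcup w (singl u q) := by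
      intro q hq hq0
      funext v
      by_cases hv : v = u
      · subst hv
        rw [sqcup_singl_self_s7 _ _ _ hwu, hovsucc_u j hj, hq]
      · rw [sqcup_singl_ne _ _ _ hv, hovsucc_ne j v hv, hw_def]
        simp [hv]
    have hovs0 : s (j + 1) u = 0 → ov (j + 1) = w := by
      intro hq
      funext v
      by_cases hv : v = u
      · subst hv
        rw [hovsucc_u j hj, hq, hwu]
      · rw [hovsucc_ne j v hv, hw_def]; simp [hv]
    have hp1 : 1 ≤ p := (hposk j hj).1
    have hpk : p ≤ k := (hposk j hj).2
    have hxK : IsKSet k x := hsK j hj.le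
    rcases hstep j hj with ⟨hacc, hrej⟩
    by_cases hC : cost c (s j) + c (e j) ≤ B ∧ c (e j) * τ ≤ marg f (e j) (pos j) (s j)
    · -- accepted
      have hs1 : s (j + 1) = sqcup x (singl u p) := hacc hC
      have hsu : s (j + 1) u = p := by rw [hs1]; exact sqcup_singl_self_s7 _ _ _ hxu
      have hg : f (s (j + 1)) - f (s j) = marg f u p x := by
        rw [hs1]; rfl
      have hgnn : 0 ≤ marg f u p x := by
        have := hC.2
        have hcu := hc u
        nlinarith [mul_nonneg (hc u).le hτ]
      have hne : s (j + 1) ≠ s j := by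
        intro h
        have : s (j + 1) u = x u := by rw [h]
        omega
      rw [if_neg (fun hcon => hne hcon.1), hg, add_zero]
      have hov1 : ov (j + 1) = sqcup w (singl u p) := hovs p hsu (by omega)
      by_cases hi0 : i = 0
      · -- o does not select u
        obtain ⟨l, hl1, hlk, hlp⟩ : ∃ l, 1 ≤ l ∧ l ≤ k ∧ l ≠ p :=
          if h : p = 1 then ⟨2, by omega, by omega, by omega⟩ else ⟨1, le_rfl, by omega, by omega⟩
        have hpair := pairwise_mono f hsub hwK hwu hp1 hpk hl1 hlk (Ne.symm hlp)
        have hmono := orthant_mono f hsub hxK hwK hxw hwu hl1 hlk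
        have hbl := hbest j hj l hl1 hlk
        rw [hovj0 hi0, hov1]
        have : f w - f (sqcup w (singl u p)) = -(marg f u p w) := by
          simp [marg]
        rw [this]
        simp only [← hu, ← hx, ← hp] at hbl
        linarith
      · have hi1 : 1 ≤ i := by omega
        have hik : i ≤ k := ho u
        by_cases hpi : p = i
        · rw [hovj hi0, hov1, ← hpi]
          linarith
        · have hpair := pairwise_mono f hsub hwK hwu hi1 hik hp1 hpk (fun h => hpi h.symm)
          have hmono := orthant_mono f hsub hxK hwK hxw hwu hi1 hik
          have hbl := hbest j hj i hi1 hik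
          rw [hovj hi0, hov1]
          have heq : f (sqcup w (singl u i)) - f (sqcup w (singl u p)) =
              marg f u i w - marg f u p w := by
            simp [marg]
          rw [heq]
          simp only [← hu, ← hx, ← hp] at hbl
          linarith
    · -- rejected
      have hs1 : s (j + 1) = s j := hrej hC
      have hsu : s (j + 1) u = 0 := by rw [hs1]; exact hxu
      have hov1 : ov (j + 1) = w := hovs0 hsu
      have hg : f (s (j + 1)) - f (s j) = 0 := by rw [hs1]; ring
      by_cases hi0 : i = 0
      · rw [hovj0 hi0, hov1, hg]
        have : ¬ (s (j + 1) = s j ∧ o (e j) ≠ 0) := fun hcon => hcon.2 hi0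
        rw [if_neg this]
        linarith
      · rw [if_pos ⟨hs1, hi0⟩, hg, hovj hi0, hov1]
        have hi1 : 1 ≤ i := by omega
        have hik : i ≤ k := ho u
        have hmono := orthant_mono f hsub hxK hwK hxw hwu hi1 hik
        have hbound : marg f u i x ≤ c u * τ := by
          by_cases hgτ : c (e j) * τ ≤ marg f (e j) (pos j) (s j)
          · have hBlt : B < cost c (s j) + c (e j) := by
              by_contra hle
              exact hC ⟨le_of_not_gt hle, hgτ⟩
            have hsnu : s n (e j) = 0 := by
              rw [hconst j hj n hj le_rfl, hsu]
            have := hnb j hj (by rw [← hu, ← hi]; exact hi0) hsnu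
            rw [not_and] at this
            have hlt := this
            by_contra hgt
            push_neg at hgt
            exact (hlt hgt.le) hBlt
          · push_neg at hgτ
            have hbl := hbest j hj i hi1 hik
            simp only [← hu, ← hx, ← hp] at hbl hgτ
            linarith
        have : f (sqcup w (singl u i)) - f w = marg f u i w := by simp [marg]
        rw [this]
        linarith
  -- sum it up
  have hsum1 : ∑ j ∈ Finset.range n, (f (ov j) - f (ov (j + 1))) = f (ov 0) - f (ov n) :=
    Finset.sum_range_sub' (fun j => f (ov j)) n
  have hsum2 : ∑ j ∈ Finset.range n, (f (s (j + 1)) - f (s j)) = f (s n) - f (s 0) :=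
    Finset.sum_range_sub (fun j => f (s j)) n
  have hle : f (ov 0) - f (ov n) ≤ 2 * (f (s n) - f (s 0)) +
      ∑ j ∈ Finset.range n, (if s (j + 1) = s j ∧ o (e j) ≠ 0 then c (e j) * τ else 0) := by
    rw [← hsum1, ← hsum2, Finset.mul_sum, ← Finset.sum_add_distrib]
    exact Finset.sum_le_sum (fun j hjmem => key j (Finset.mem_range.mp hjmem))
  have hsumR : ∑ j ∈ Finset.range n, (if s (j + 1) = s j ∧ o (e j) ≠ 0 then c (e j) * τ else 0)
      ≤ cost c o * τ := by
    rw [← Finset.sum_filter]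
    set S := (Finset.range n).filter (fun j => s (j + 1) = s j ∧ o (e j) ≠ 0) with hS
    have : ∑ j ∈ S, c (e j) * τ = (∑ j ∈ S, c (e j)) * τ := by
      rw [Finset.sum_mul]
    rw [this]
    have hcs : ∑ j ∈ S, c (e j) ≤ cost c o := by
      have himg : ∑ j ∈ S, c (e j) = ∑ v ∈ S.image e, c v := by
        rw [Finset.sum_image]
        intro a ha b hb hab
        have ha' := Finset.mem_range.mp (Finset.mem_filter.mp ha).1
        have hb' := Finset.mem_range.mp (Finset.mem_filter.mp hb).1
        exact hinj a b ha' hb' hab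
      rw [himg, cost]
      apply Finset.sum_le_sum_of_subset_of_nonneg
      · intro v hv
        obtain ⟨j, hjS, hje⟩ := Finset.mem_image.mp hv
        have := (Finset.mem_filter.mp hjS).2.2
        rw [Finset.mem_filter]
        exact ⟨Finset.mem_univ v, hje ▸ this⟩
      · intro v _ _; exact (hc v).le
    exact mul_le_mul_of_nonneg_right hcs hτ
  have hs0' : f (s 0) = 0 := by rw [hs0]; exact hf0
  rw [hov0, hovn] at hle
  linarith
end
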